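/- Let H be a finite set of positive integers and let H_rel be the set of elements h ∈ H that are coprime to every other element of H. Then 1 − d(M(H)) = (1 − d(M(H \ H_rel))) · ∏_{h ∈ H_rel} (1 − 1/h), where M(S) denotes the set of positive integers divisible by some element of S and d denotes asymptotic density. -/

import Mathlib

open Filter

/-- The number of elements of `S` lying in `[1, x]`. -/
noncomputable def countIn (S : Set ℕ) (x : ℕ) : ℕ := (S ∩ Set.Icc 1 x).ncard

/-- `S` has asymptotic density `δ`. -/
def HasDensity (S : Set ℕ) (δ : ℝ) : Prop :=
  Tendsto (fun x : ℕ => (countIn S x : ℝ) / x) atTop (nhds δ)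

/-- The upper asymptotic density of `S`. -/
noncomputable def upperDensity (S : Set ℕ) : ℝ :=
  limsup (fun x : ℕ => (countIn S x : ℝ) / x) atTop

/-- The set of multiples of a finite set `H` of positive integers. -/
def setOfMultiples (H : Finset ℕ) : Set ℕ := {n : ℕ | 0 < n ∧ ∃ h ∈ H, h ∣ n}

/-! ### Auxiliary counting machinery -/

/-- Number of `n ∈ [0, m)` not divisible by any element of `S`. -/
def auxN (S : Finset ℕ) (m : ℕ) : ℕ :=
  ((Finset.range m).filter fun n => ∀ s ∈ S, ¬ s ∣ n).card

lemma auxN_insert (S : Finset ℕ) (h m : ℕ) (hh : 0 < h) (hm : 0 < m)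
    (hcop : Nat.Coprime h m) (hdvd : ∀ s ∈ S, s ∣ m) :
    auxN (insert h S) (m * h) = auxN S m * (h - 1) := by
  classical
  have hco' : Nat.Coprime m h := hcop.symm
  have key : ((Finset.range (m * h)).filter fun n => ∀ s ∈ insert h S, ¬ s ∣ n).card
      = (((Finset.range m).filter fun a => ∀ s ∈ S, ¬ s ∣ a) ×ˢ
          ((Finset.range h).filter fun b => b ≠ 0)).card := by
    apply Finset.card_bij (fun n _ => (n % m, n % h))
    · rintro n hn
      simp only [Finset.mem_filter, Finset.mem_range, Finset.mem_insert] at hn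
      obtain ⟨hlt, hP⟩ := hn
      simp only [Finset.mem_product, Finset.mem_filter, Finset.mem_range]
      refine ⟨⟨Nat.mod_lt _ hm, ?_⟩, Nat.mod_lt _ hh, ?_⟩
      · intro s hs hdvds
        exact hP s (Or.inr hs) ((Nat.dvd_mod_iff (hdvd s hs)).mp hdvds)
      · intro h0
        exact hP h (Or.inl rfl) (Nat.dvd_of_mod_eq_zero h0)
    · rintro n₁ hn₁ n₂ hn₂ heq
      simp only [Finset.mem_filter, Finset.mem_range] at hn₁ hn₂
      have h1 : n₁ ≡ n₂ [MOD m] := by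
        simpa [Nat.ModEq] using congrArg Prod.fst heq
      have h2 : n₁ ≡ n₂ [MOD h] := by
        simpa [Nat.ModEq] using congrArg Prod.snd heq
      have h3 : n₁ ≡ n₂ [MOD m * h] :=
        (Nat.modEq_and_modEq_iff_modEq_mul hco').mp ⟨h1, h2⟩
      have := h3
      unfold Nat.ModEq at this
      rwa [Nat.mod_eq_of_lt hn₁.1, Nat.mod_eq_of_lt hn₂.1] at this
    · rintro ⟨a, b⟩ hab
      simp only [Finset.mem_product, Finset.mem_filter, Finset.mem_range] at hab
      obtain ⟨⟨ham, haP⟩, hbh, hb0⟩ := hab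
      set k : ℕ := (Nat.chineseRemainder hco' a b : ℕ) with hkdef
      have hka : k ≡ a [MOD m] := (Nat.chineseRemainder hco' a b).2.1
      have hkb : k ≡ b [MOD h] := (Nat.chineseRemainder hco' a b).2.2
      have hklt : k < m * h := Nat.chineseRemainder_lt_mul hco' a b hm.ne' hh.ne'
      refine ⟨k, ?_, ?_⟩
      · simp only [Finset.mem_filter, Finset.mem_range, Finset.mem_insert]
        refine ⟨hklt, ?_⟩
        rintro s (rfl | hs) hdvds
        · -- s = h
          have hkh : k % s = 0 := Nat.mod_eq_zero_of_dvd hdvds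
          have hbb : b % s = 0 := by rw [← hkb]; exact hkh
          rw [Nat.mod_eq_of_lt hbh] at hbb
          exact hb0 hbb
        · -- s ∈ S
          have hsm : s ∣ m := hdvd s hs
          have hmod : k ≡ a [MOD s] := Nat.ModEq.of_dvd hsm hka
          have hsa : s ∣ a := by
            have hk0 : k % s = 0 := Nat.mod_eq_zero_of_dvd hdvds
            have : a % s = 0 := by rw [← hmod]; exact hk0
            exact Nat.dvd_of_mod_eq_zero this
          exact haP s hs hsa
      · have h1 : k % m = a := by
          have := hka
          unfold Nat.ModEq at this
          rw [this, Nat.mod_eq_of_lt ham]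
        have h2 : k % h = b := by
          have := hkb
          unfold Nat.ModEq at this
          rw [this, Nat.mod_eq_of_lt hbh]
        simp [h1, h2]
  rw [auxN, key, Finset.card_product, auxN]
  congr 1
  have : ((Finset.range h).filter fun b => b ≠ 0) = Finset.Ioo 0 h := by
    ext b
    simp [Nat.pos_iff_ne_zero, and_comm]
  rw [this, Nat.card_Ioo]
  omega

lemma auxN_union (R : Finset ℕ) (S : Finset ℕ) (m : ℕ) (hm : 0 < m)
    (hdvd : ∀ s ∈ S, s ∣ m)
    (hR : ∀ r ∈ R, 0 < r ∧ Nat.Coprime r m ∧ ∀ r' ∈ R, r' ≠ r → Nat.Coprime r r') :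
    auxN (R ∪ S) (m * ∏ r ∈ R, r) = auxN S m * ∏ r ∈ R, (r - 1) := by
  classical
  induction R using Finset.induction with
  | empty => simp
  | @insert r R hr ih =>
    have hrpos : 0 < r := (hR r (Finset.mem_insert_self r R)).1
    have hRpos : ∀ r' ∈ R, 0 < r' := fun r' hr' =>
      (hR r' (Finset.mem_insert_of_mem hr')).1
    have hprodpos : 0 < ∏ r' ∈ R, r' := Finset.prod_pos hRpos
    have hcopR : ∀ r' ∈ R, Nat.Coprime r r' := by
      intro r' hr'
      exact (hR r (Finset.mem_insert_self r R)).2.2 r' (Finset.mem_insert_of_mem hr')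
        (fun heq => hr (heq ▸ hr'))
    have hcop : Nat.Coprime r (m * ∏ r' ∈ R, r') :=
      Nat.Coprime.mul_right (hR r (Finset.mem_insert_self r R)).2.1
        (Nat.Coprime.prod_right hcopR)
    have hdvd' : ∀ s ∈ R ∪ S, s ∣ m * ∏ r' ∈ R, r' := by
      intro s hs
      rcases Finset.mem_union.mp hs with hs | hs
      · exact dvd_mul_of_dvd_right (Finset.dvd_prod_of_mem _ hs) m
      · exact dvd_mul_of_dvd_left (hdvd s hs) _
    have ihh : auxN (R ∪ S) (m * ∏ r' ∈ R, r') = auxN S m * ∏ r' ∈ R, (r' - 1) := by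
      apply ih
      intro r' hr'
      refine ⟨hRpos r' hr', (hR r' (Finset.mem_insert_of_mem hr')).2.1, ?_⟩
      intro r'' hr'' hne
      exact (hR r' (Finset.mem_insert_of_mem hr')).2.2 r'' (Finset.mem_insert_of_mem hr'') hne
    have e1 : insert r R ∪ S = insert r (R ∪ S) := by
      ext x; simp [Finset.mem_insert, Finset.mem_union, or_assoc]
    have e2 : m * ∏ r' ∈ insert r R, r' = (m * ∏ r' ∈ R, r') * r := by
      rw [Finset.prod_insert hr]; ring
    rw [e1, e2, auxN_insert (R ∪ S) r (m * ∏ r' ∈ R, r') hrpos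
      (Nat.mul_pos hm hprodpos) hcop hdvd', ihh, Finset.prod_insert hr]
    ring

/-- Complement count: multiples in `[1,m]` plus non-multiples in `[0,m)` is `m`. -/
lemma count_add_auxN (S : Finset ℕ) (m : ℕ) (hm : 0 < m) (hdvd : ∀ s ∈ S, s ∣ m) :
    ((Finset.Icc 1 m).filter fun n => ∃ s ∈ S, s ∣ n).card + auxN S m = m := by
  classical
  have hNeq : auxN S m = ((Finset.range m).filter fun n => ¬ ∃ s ∈ S, s ∣ n).card := by
    unfold auxN
    congr 1
    apply Finset.filter_congr
    intro n _
    simp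
  have hbij : ((Finset.range m).filter fun n => ∃ s ∈ S, s ∣ n).card
      = ((Finset.Icc 1 m).filter fun n => ∃ s ∈ S, s ∣ n).card := by
    apply Finset.card_bij (fun n _ => if n = 0 then m else n)
    · intro n hn
      simp only [Finset.mem_filter, Finset.mem_range] at hn
      by_cases h0 : n = 0
      · subst h0
        simp only [if_pos rfl, Finset.mem_filter, Finset.mem_Icc]
        obtain ⟨s, hs, _⟩ := hn.2
        exact ⟨⟨hm, le_refl m⟩, s, hs, hdvd s hs⟩
      · simp only [if_neg h0, Finset.mem_filter, Finset.mem_Icc]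
        exact ⟨⟨Nat.one_le_iff_ne_zero.mpr h0, le_of_lt hn.1⟩, hn.2⟩
    · intro n₁ hn₁ n₂ hn₂ heq
      simp only [Finset.mem_filter, Finset.mem_range] at hn₁ hn₂
      by_cases h1 : n₁ = 0 <;> by_cases h2 : n₂ = 0 <;>
        simp [h1, h2] at heq ⊢ <;> omega
    · intro b hb
      simp only [Finset.mem_filter, Finset.mem_Icc] at hb
      by_cases hbm : b = m
      · refine ⟨0, ?_, by simp [hbm]⟩
        simp only [Finset.mem_filter, Finset.mem_range]
        obtain ⟨s, hs, _⟩ := hb.2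
        exact ⟨hm, s, hs, dvd_zero s⟩
      · have hb0 : b ≠ 0 := by omega
        refine ⟨b, ?_, by simp [hb0]⟩
        simp only [Finset.mem_filter, Finset.mem_range]
        exact ⟨lt_of_le_of_ne hb.1.2 hbm, hb.2⟩
  rw [hNeq, ← hbij]
  rw [Finset.card_filter_add_card_filter_not, Finset.card_range]

/-! ### Density of a periodic set -/

lemma hasDensity_periodic (P : ℕ → Prop) [DecidablePred P] (L : ℕ) (hL : 0 < L)
    (hper : ∀ n, P (n + L) ↔ P n) :
    HasDensity {n | 0 < n ∧ P n} ((((Finset.Icc 1 L).filter P).card : ℝ) / L) := by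
  classical
  set c : ℕ := ((Finset.Icc 1 L).filter P).card with hc
  set f : ℕ → ℕ := fun x => ((Finset.Icc 1 x).filter P).card with hf
  -- countIn equals f
  have hcount : ∀ x, countIn {n | 0 < n ∧ P n} x = f x := by
    intro x
    have : {n | 0 < n ∧ P n} ∩ Set.Icc 1 x = ↑((Finset.Icc 1 x).filter P) := by
      ext n
      simp only [Set.mem_inter_iff, Set.mem_setOf_eq, Set.mem_Icc, Finset.coe_filter,
        Finset.mem_Icc, Set.mem_setOf_eq]
      constructor
      · rintro ⟨⟨hn0, hPn⟩, h1, h2⟩; exact ⟨⟨h1, h2⟩, hPn⟩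
      · rintro ⟨⟨h1, h2⟩, hPn⟩; exact ⟨⟨h1, hPn⟩, h1, h2⟩
    rw [countIn, this, Set.ncard_coe_finset]
  -- multi-step periodicity
  have hperk : ∀ k n, P (n + k * L) ↔ P n := by
    intro k
    induction k with
    | zero => simp
    | succ k ih =>
      intro n
      have : n + (k + 1) * L = (n + k * L) + L := by ring
      rw [this, hper, ih]
  -- f (k * L) = k * c
  have hfk : ∀ k, f (k * L) = k * c := by
    intro k
    induction k with
    | zero => simp [hf]
    | succ k ih =>
      have hkl : (k + 1) * L = k * L + L := by ring
      have hsplit : Finset.Icc 1 ((k + 1) * L) =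
          Finset.Icc 1 (k * L) ∪ Finset.Ioc (k * L) ((k + 1) * L) := by
        ext n
        simp only [Finset.mem_union, Finset.mem_Icc, Finset.mem_Ioc]
        omega
      have hdisj : Disjoint (Finset.Icc 1 (k * L)) (Finset.Ioc (k * L) ((k + 1) * L)) := by
        rw [Finset.disjoint_left]
        intro n hn hn'
        simp only [Finset.mem_Icc] at hn
        simp only [Finset.mem_Ioc] at hn'
        omega
      have hioc : ((Finset.Ioc (k * L) ((k + 1) * L)).filter P).card = c := by
        rw [hc]
        have hicc : Finset.Icc 1 L = Finset.Ioc 0 L := by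
          ext n; simp only [Finset.mem_Icc, Finset.mem_Ioc]; omega
        rw [hicc]
        symm
        apply Finset.card_bij (fun a _ => a + k * L)
        · intro a ha
          simp only [Finset.mem_filter, Finset.mem_Ioc] at ha ⊢
          exact ⟨⟨by omega, by omega⟩, (hperk k a).mpr ha.2⟩
        · intro a₁ _ a₂ _ h; omega
        · intro b hb
          simp only [Finset.mem_filter, Finset.mem_Ioc] at hb
          refine ⟨b - k * L, ?_, by omega⟩
          simp only [Finset.mem_filter, Finset.mem_Ioc]
          have hb' : b - k * L + k * L = b := by omega
          refine ⟨⟨by omega, by omega⟩, ?_⟩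
          rw [← hperk k (b - k * L), hb']
          exact hb.2
      show ((Finset.Icc 1 ((k + 1) * L)).filter P).card = (k + 1) * c
      rw [hsplit, Finset.filter_union, Finset.card_union_of_disjoint
        (Finset.disjoint_filter_filter hdisj)]
      have hih : ((Finset.Icc 1 (k * L)).filter P).card = k * c := ih
      rw [hih, hioc]
      ring
  -- monotonicity
  have hmono : Monotone f := by
    intro a b hab
    apply Finset.card_le_card
    apply Finset.filter_subset_filter
    exact Finset.Icc_subset_Icc le_rfl hab
  -- bounds
  have hbound : ∀ x : ℕ, (x / L) * c ≤ f x ∧ f x ≤ (x / L + 1) * c := by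
    intro x
    constructor
    · rw [← hfk]
      exact hmono (Nat.div_mul_le_self x L)
    · rw [← hfk]
      apply hmono
      have e1 := Nat.div_add_mod x L
      have e2 := Nat.mod_lt x hL
      have e3 : (x / L + 1) * L = L * (x / L) + L := by ring
      omega
  -- squeeze
  have key : Tendsto (fun x : ℕ => (f x : ℝ) / x) atTop (nhds ((c : ℝ) / L)) := by
    have hz := tendsto_const_div_atTop_nhds_zero_nat (c : ℝ)
    have hlo : Tendsto (fun x : ℕ => (c : ℝ) / L - c / x) atTop (nhds ((c : ℝ) / L)) := by
      simpa using hz.const_sub ((c : ℝ) / L)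
    have hhi : Tendsto (fun x : ℕ => (c : ℝ) / L + c / x) atTop (nhds ((c : ℝ) / L)) := by
      simpa using hz.const_add ((c : ℝ) / L)
    apply tendsto_of_tendsto_of_tendsto_of_le_of_le' hlo hhi
    · filter_upwards [eventually_ge_atTop 1] with x hx
      have hx0 : (0 : ℝ) < x := by exact_mod_cast hx
      have hL0 : (0 : ℝ) < L := by exact_mod_cast hL
      obtain ⟨h1, _⟩ := hbound x
      have hq1 : (x : ℝ) < (((x / L : ℕ) : ℝ) + 1) * L := by
        have hn : x < (x / L + 1) * L := by
          have e1 := Nat.div_add_mod x L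
          have e2 := Nat.mod_lt x hL
          have e3 : (x / L + 1) * L = L * (x / L) + L := by ring
          omega
        exact_mod_cast hn
      have hq : (x : ℝ) / L - 1 ≤ ((x / L : ℕ) : ℝ) := by
        rw [sub_le_iff_le_add, div_le_iff₀ hL0]
        nlinarith
      have h1' : ((x / L : ℕ) : ℝ) * c ≤ f x := by exact_mod_cast h1
      have hcnn : (0 : ℝ) ≤ c := Nat.cast_nonneg c
      have hfl : ((x : ℝ) / L - 1) * c ≤ f x := by nlinarith
      rw [le_div_iff₀ hx0]
      have hrw : ((c : ℝ) / L - c / x) * x = ((x : ℝ) / L - 1) * c := by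
        field_simp
      rw [hrw]
      exact hfl
    · filter_upwards [eventually_ge_atTop 1] with x hx
      have hx0 : (0 : ℝ) < x := by exact_mod_cast hx
      have hL0 : (0 : ℝ) < L := by exact_mod_cast hL
      obtain ⟨_, h2⟩ := hbound x
      have hq : ((x / L : ℕ) : ℝ) ≤ (x : ℝ) / L := by
        rw [le_div_iff₀ hL0]
        exact_mod_cast Nat.div_mul_le_self x L
      have h2' : (f x : ℝ) ≤ (((x / L : ℕ) : ℝ) + 1) * c := by exact_mod_cast h2
      have hcnn : (0 : ℝ) ≤ c := Nat.cast_nonneg c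
      have hfu : (f x : ℝ) ≤ ((x : ℝ) / L + 1) * c := by nlinarith
      rw [div_le_iff₀ hx0]
      have hrw : ((c : ℝ) / L + c / x) * x = ((x : ℝ) / L + 1) * c := by
        field_simp
      rw [hrw]
      exact hfu
  unfold HasDensity
  apply key.congr'
  filter_upwards with x
  rw [hcount]

/-! ### Main theorem -/

theorem stmt1 (H : Finset ℕ) (hH : ∀ h ∈ H, 0 < h)
    (Hrel : Finset ℕ)
    (hHrel : Hrel = H.filter fun h => ∀ h' ∈ H, h' ≠ h → Nat.Coprime h h') :
    ∃ δ δ' : ℝ,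
      HasDensity (setOfMultiples H) δ ∧
      HasDensity (setOfMultiples (H \ Hrel)) δ' ∧
      1 - δ = (1 - δ') * ∏ h ∈ Hrel, (1 - 1 / (h : ℝ)) := by
  classical
  set G : Finset ℕ := H \ Hrel with hG
  have hsub : Hrel ⊆ H := by rw [hHrel]; exact Finset.filter_subset _ _
  have hGsub : G ⊆ H := Finset.sdiff_subset
  have hGpos : ∀ s ∈ G, 0 < s := fun s hs => hH s (hGsub hs)
  have hRpos : ∀ r ∈ Hrel, 0 < r := fun r hr => hH r (hsub hr)
  set L' : ℕ := ∏ s ∈ G, s with hL'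
  set PR : ℕ := ∏ r ∈ Hrel, r with hPR
  set M : ℕ := L' * PR with hM
  have hL'pos : 0 < L' := Finset.prod_pos hGpos
  have hPRpos : 0 < PR := Finset.prod_pos hRpos
  have hMpos : 0 < M := Nat.mul_pos hL'pos hPRpos
  have hcopG : ∀ r ∈ Hrel, ∀ s ∈ G, Nat.Coprime r s := by
    intro r hr s hs
    have hr2 := hr
    rw [hHrel] at hr2
    obtain ⟨hrH, hrcop⟩ := Finset.mem_filter.mp hr2
    apply hrcop s (hGsub hs)
    intro heq
    rw [hG] at hs
    exact (Finset.mem_sdiff.mp hs).2 (heq ▸ hr)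
  have hcopRR : ∀ r ∈ Hrel, ∀ r' ∈ Hrel, r' ≠ r → Nat.Coprime r r' := by
    intro r hr r' hr' hne
    have hr2 := hr
    rw [hHrel] at hr2
    obtain ⟨hrH, hrcop⟩ := Finset.mem_filter.mp hr2
    exact hrcop r' (hsub hr') hne
  have hdvdG : ∀ s ∈ G, s ∣ L' := fun s hs => Finset.dvd_prod_of_mem _ hs
  have hdvdH : ∀ h ∈ H, h ∣ M := by
    intro h hh
    by_cases hhr : h ∈ Hrel
    · exact dvd_mul_of_dvd_right (Finset.dvd_prod_of_mem _ hhr) L'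
    · have : h ∈ G := Finset.mem_sdiff.mpr ⟨hh, hhr⟩
      exact dvd_mul_of_dvd_left (hdvdG h this) PR
  -- periodicity of the two predicates
  have hperH : ∀ n, (∃ h ∈ H, h ∣ (n + M)) ↔ (∃ h ∈ H, h ∣ n) := by
    intro n
    constructor <;> rintro ⟨h, hh, hd⟩ <;> refine ⟨h, hh, ?_⟩
    · exact (Nat.dvd_add_right (hdvdH h hh)).mp (by rwa [add_comm] at hd)
    · exact hd.add (hdvdH h hh)
  have hperG : ∀ n, (∃ h ∈ G, h ∣ (n + L')) ↔ (∃ h ∈ G, h ∣ n) := by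
    intro n
    constructor <;> rintro ⟨h, hh, hd⟩ <;> refine ⟨h, hh, ?_⟩
    · exact (Nat.dvd_add_right (hdvdG h hh)).mp (by rwa [add_comm] at hd)
    · exact hd.add (hdvdG h hh)
  have hdH := hasDensity_periodic (fun n => ∃ h ∈ H, h ∣ n) M hMpos hperH
  have hdG := hasDensity_periodic (fun n => ∃ h ∈ G, h ∣ n) L' hL'pos hperG
  set c : ℕ := ((Finset.Icc 1 M).filter fun n => ∃ h ∈ H, h ∣ n).card with hc
  set c' : ℕ := ((Finset.Icc 1 L').filter fun n => ∃ h ∈ G, h ∣ n).card with hc'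
  refine ⟨(c : ℝ) / M, (c' : ℝ) / L', hdH, hdG, ?_⟩
  -- counting identities
  have h1 : c + auxN H M = M := count_add_auxN H M hMpos hdvdH
  have h2 : c' + auxN G L' = L' := count_add_auxN G L' hL'pos hdvdG
  have h3 : auxN H M = auxN G L' * ∏ r ∈ Hrel, (r - 1) := by
    have hu : Hrel ∪ G = H := Finset.union_sdiff_of_subset hsub
    have := auxN_union Hrel G L' hL'pos hdvdG (fun r hr =>
      ⟨hRpos r hr, Nat.Coprime.prod_right (fun s hs => hcopG r hr s hs), hcopRR r hr⟩)
    rwa [hu, ← hPR, ← hM] at this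
  -- real arithmetic
  have hMne : (M : ℝ) ≠ 0 := by exact_mod_cast hMpos.ne'
  have hL'ne : (L' : ℝ) ≠ 0 := by exact_mod_cast hL'pos.ne'
  have hPRne : (PR : ℝ) ≠ 0 := by exact_mod_cast hPRpos.ne'
  have e1 : (1 : ℝ) - (c : ℝ) / M = (auxN H M : ℝ) / M := by
    have hcast : (c : ℝ) + (auxN H M : ℝ) = M := by exact_mod_cast h1
    field_simp
    linarith
  have e2 : (1 : ℝ) - (c' : ℝ) / L' = (auxN G L' : ℝ) / L' := by
    have hcast : (c' : ℝ) + (auxN G L' : ℝ) = L' := by exact_mod_cast h2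
    field_simp
    linarith
  have eprod : ∏ h ∈ Hrel, ((1 : ℝ) - 1 / (h : ℝ))
      = ((∏ r ∈ Hrel, (r - 1) : ℕ) : ℝ) / (PR : ℝ) := by
    rw [Nat.cast_prod, hPR, Nat.cast_prod, ← Finset.prod_div_distrib]
    apply Finset.prod_congr rfl
    intro r hr
    have h1r : (1 : ℕ) ≤ r := hRpos r hr
    have hr0 : (r : ℝ) ≠ 0 := by
      have := hRpos r hr
      exact_mod_cast this.ne'
    rw [Nat.cast_sub h1r]
    field_simp
    simp
  rw [e1, e2, eprod]
  have hMcast : (M : ℝ) = (L' : ℝ) * PR := by rw [hM]; push_cast; ring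
  have h3cast : (auxN H M : ℝ) = (auxN G L' : ℝ) * ((∏ r ∈ Hrel, (r - 1) : ℕ) : ℝ) := by
    exact_mod_cast h3
  rw [h3cast, hMcast]
  field_simp
  try ring
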